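/- Uniformly for m ∈ ℤ, | ∫_{-π}^{π} |sin θ|^{-3/8} e^{imθ} dθ/(2π) | ≲ ⟨m⟩^{-5/8}, where ⟨m⟩ = (1+m²)^{1/2}. -/

import Mathlib

open MeasureTheory Real intervalIntegral

noncomputable section

namespace Stmt8aux

def f (θ : ℝ) : ℝ := |Real.sin θ| ^ (-(3:ℝ)/8)
def q (δ θ : ℝ) : ℝ := (max |Real.sin θ| δ) ^ (-(3:ℝ)/8)
def M (δ θ : ℝ) : ℝ := (max |Real.sin θ| δ) ^ (-(11:ℝ)/8)

lemma bern {s : ℝ} (hs : 0 ≤ s) : 1 - 3/8*s ≤ (1+s) ^ (-(3:ℝ)/8) := by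
  have h1 : (1+s) ^ ((3:ℝ)/8) ≤ 1 + (3:ℝ)/8*s := by
    have := rpow_one_add_le_one_add_mul_self (s := s) (p := (3:ℝ)/8)
      (by linarith) (by norm_num) (by norm_num)
    linarith
  have hpos : (0:ℝ) < 1 + s := by linarith
  have hp2 : (0:ℝ) < (1+s) ^ ((3:ℝ)/8) := rpow_pos_of_pos hpos _
  have key : (1+s)^(-(3:ℝ)/8) = ((1+s)^((3:ℝ)/8))⁻¹ := by
    rw [← Real.rpow_neg hpos.le]; norm_num
  rw [key, ← one_div, le_div_iff₀ hp2]
  rcases le_or_gt (1 - 3/8*s) 0 with h|h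
  · exact le_trans (mul_nonpos_of_nonpos_of_nonneg h hp2.le) zero_le_one
  · calc (1-3/8*s)*((1+s)^((3:ℝ)/8)) ≤ (1-3/8*s)*(1+3/8*s) := by nlinarith
      _ ≤ 1 := by nlinarith

lemma pow_tangent {X Y : ℝ} (hX : 0 < X) (hXY : X ≤ Y) :
    X ^ (-(3:ℝ)/8) - Y ^ (-(3:ℝ)/8) ≤ 3/8 * (Y - X) * X ^ (-(11:ℝ)/8) := by
  set s := (Y - X)/X with hs
  have hs0 : 0 ≤ s := div_nonneg (by linarith) hX.le
  have hY : Y = X * (1 + s) := by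
    rw [hs, mul_add, mul_one, mul_div_assoc', mul_comm X (Y-X), mul_div_assoc, div_self hX.ne',
      mul_one]; ring
  have h1 : Y ^ (-(3:ℝ)/8) = X ^ (-(3:ℝ)/8) * (1+s)^(-(3:ℝ)/8) := by
    rw [hY, Real.mul_rpow hX.le (by linarith)]
  have h2 := bern hs0
  have hXp : (0:ℝ) < X ^ (-(3:ℝ)/8) := rpow_pos_of_pos hX _
  have h4 : X ^ (-(3:ℝ)/8) - Y ^ (-(3:ℝ)/8) ≤ X^(-(3:ℝ)/8) * (3/8*s) := by
    rw [h1]; nlinarith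
  have h6 : X^(-(3:ℝ)/8) * X⁻¹ = X ^ (-(11:ℝ)/8) := by
    rw [← Real.rpow_neg_one X, ← Real.rpow_add hX]; norm_num
  have h5 : X^(-(3:ℝ)/8) * (3/8*s) = 3/8*(Y-X) * (X^(-(3:ℝ)/8) * X⁻¹) := by
    rw [hs]; field_simp
  rw [h5, h6] at h4; exact h4

lemma lip_aux {x y δ : ℝ} (hδ : 0 < δ) (h : max x δ ≤ max y δ) :
    |max x δ ^ (-(3:ℝ)/8) - max y δ ^ (-(3:ℝ)/8)| ≤
      3/8 * |x - y| * (max x δ ^ (-(11:ℝ)/8) + max y δ ^ (-(11:ℝ)/8)) := by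
  have hX : 0 < max x δ := lt_of_lt_of_le hδ (le_max_right _ _)
  have h0 : max y δ ^ (-(3:ℝ)/8) ≤ max x δ ^ (-(3:ℝ)/8) :=
    rpow_le_rpow_of_nonpos hX h (by norm_num)
  rw [abs_of_nonneg (by linarith)]
  have h1 := pow_tangent hX h
  have h2 : max y δ - max x δ ≤ |x - y| := by
    have h' := abs_max_sub_max_le_abs x y δ
    have h'' : max y δ - max x δ ≤ |max x δ - max y δ| := by
      rw [abs_sub_comm]; exact le_abs_self _
    linarith
  have h3 : (0:ℝ) ≤ max x δ ^ (-(11:ℝ)/8) := (rpow_pos_of_pos hX _).le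
  have h4 : (0:ℝ) ≤ max y δ ^ (-(11:ℝ)/8) :=
    (rpow_pos_of_pos (lt_of_lt_of_le hδ (le_max_right _ _)) _).le
  nlinarith

lemma lip {x y δ : ℝ} (hδ : 0 < δ) :
    |max x δ ^ (-(3:ℝ)/8) - max y δ ^ (-(3:ℝ)/8)| ≤
      3/8 * |x - y| * (max x δ ^ (-(11:ℝ)/8) + max y δ ^ (-(11:ℝ)/8)) := by
  rcases le_total (max x δ) (max y δ) with h | h
  · exact lip_aux hδ h
  · have := lip_aux hδ h
    rw [abs_sub_comm, abs_sub_comm y x] at this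
    linarith

lemma q_mono {δ u v : ℝ} (hu : 0 < u) (huv : u ≤ v) :
    v ^ (-(3:ℝ)/8) - max v δ ^ (-(3:ℝ)/8) ≤ u ^ (-(3:ℝ)/8) - max u δ ^ (-(3:ℝ)/8) := by
  rcases le_total v δ with h | h
  · rw [max_eq_right h, max_eq_right (le_trans huv h)]
    have := rpow_le_rpow_of_nonpos hu huv (show -(3:ℝ)/8 ≤ 0 by norm_num)
    linarith
  · rcases le_total δ u with h2 | h2
    · rw [max_eq_left (le_trans h2 huv), max_eq_left h2]; simp
    · rw [max_eq_left h, max_eq_right h2]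
      have := rpow_le_rpow_of_nonpos hu h2 (show -(3:ℝ)/8 ≤ 0 by norm_num)
      linarith

lemma M_mono {δ u v : ℝ} (hδ : 0 < δ) (huv : u ≤ v) :
    max v δ ^ (-(11:ℝ)/8) ≤ max u δ ^ (-(11:ℝ)/8) :=
  rpow_le_rpow_of_nonpos (lt_of_lt_of_le hδ (le_max_right _ _))
    (max_le_max huv le_rfl) (by norm_num)

lemma f_periodic : Function.Periodic f (2*π) := fun x => by
  simp [f, Real.sin_add_two_pi]

lemma q_periodic (δ : ℝ) : Function.Periodic (q δ) (2*π) := fun x => by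
  simp [q, Real.sin_add_two_pi]

lemma M_periodic (δ : ℝ) : Function.Periodic (M δ) (2*π) := fun x => by
  simp [M, Real.sin_add_two_pi]

lemma sin_zero_null : volume {θ : ℝ | Real.sin θ = 0} = 0 := by
  have hsub : {θ : ℝ | Real.sin θ = 0} ⊆ Set.range (fun k : ℤ => (k:ℝ) * π) := by
    intro θ hθ
    rcases Real.sin_eq_zero_iff.1 hθ with ⟨k, hk⟩
    exact ⟨k, hk⟩
  exact measure_mono_null hsub ((Set.countable_range _).measure_zero _)

lemma sin_shift_null (h : ℝ) : volume {θ : ℝ | Real.sin (θ + h) = 0} = 0 := by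
  have hsub : {θ : ℝ | Real.sin (θ + h) = 0} ⊆ Set.range (fun k : ℤ => (k:ℝ) * π - h) := by
    intro θ hθ
    rcases Real.sin_eq_zero_iff.1 hθ with ⟨k, hk⟩
    exact ⟨k, by simp only; rw [hk]; ring⟩
  exact measure_mono_null hsub ((Set.countable_range _).measure_zero _)

def g (θ : ℝ) : ℝ := Real.exp (Real.log |Real.sin θ| * (-(3:ℝ)/8))

lemma g_meas : Measurable g :=
  Real.measurable_exp.comp ((Real.measurable_log.comp measurable_sin.abs).mul measurable_const)

lemma f_eq_g_ae : f =ᵐ[volume] g := by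
  have h0 : ∀ᵐ θ : ℝ ∂volume, Real.sin θ ≠ 0 := by
    rw [MeasureTheory.ae_iff]
    simpa using sin_zero_null
  filter_upwards [h0] with θ hθ
  have : 0 < |Real.sin θ| := abs_pos.2 hθ
  rw [f, g, Real.rpow_def_of_pos this]

lemma f_aesm (s : Set ℝ) : AEStronglyMeasurable f (volume.restrict s) :=
  g_meas.aestronglyMeasurable.congr (ae_restrict_of_ae f_eq_g_ae.symm)

lemma f_shift_aesm (h : ℝ) (s : Set ℝ) :
    AEStronglyMeasurable (fun θ => f (θ + h)) (volume.restrict s) := by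
  have h0 : ∀ᵐ θ : ℝ ∂volume, Real.sin (θ + h) ≠ 0 := by
    rw [MeasureTheory.ae_iff]
    simpa using sin_shift_null h
  have heq : (fun θ => g (θ + h)) =ᵐ[volume] (fun θ => f (θ + h)) := by
    filter_upwards [h0] with θ hθ
    have : 0 < |Real.sin (θ + h)| := abs_pos.2 hθ
    rw [f, g, Real.rpow_def_of_pos this]
  exact (g_meas.comp (measurable_id.add_const h)).aestronglyMeasurable.congr
    (ae_restrict_of_ae heq)

lemma f_nonneg (θ : ℝ) : 0 ≤ f θ := rpow_nonneg (abs_nonneg _) _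

lemma q_cont {δ : ℝ} (hδ : 0 < δ) : Continuous (q δ) := by
  apply Continuous.rpow_const (continuous_sin.abs.max continuous_const)
  intro x; left
  exact ne_of_gt (lt_of_lt_of_le hδ (le_max_right _ _))

lemma M_cont {δ : ℝ} (hδ : 0 < δ) : Continuous (M δ) := by
  apply Continuous.rpow_const (continuous_sin.abs.max continuous_const)
  intro x; left
  exact ne_of_gt (lt_of_lt_of_le hδ (le_max_right _ _))

lemma jordan {θ : ℝ} (h1 : 0 < θ) (h2 : θ ≤ π/2) : 2/π*θ ≤ |Real.sin θ| := by
  rw [abs_of_nonneg (sin_nonneg_of_nonneg_of_le_pi h1.le (by linarith [pi_pos]))]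
  exact mul_le_sin h1.le h2

lemma f_int_quarter : IntervalIntegrable f volume 0 (π/2) := by
  have hbig : IntervalIntegrable (fun x : ℝ => (2/π*x) ^ (-(3:ℝ)/8)) volume 0 (π/2) := by
    have h := (intervalIntegrable_rpow' (a := 0) (b := 1)
      (show (-1:ℝ) < -(3:ℝ)/8 by norm_num)).comp_mul_left (c := 2/π) enorm_ne_top enorm_ne_top
    have e0 : (0:ℝ) / (2/π) = 0 := by simp
    have e1 : (1:ℝ) / (2/π) = π/2 := by field_simp
    rwa [e0, e1] at h
  apply hbig.mono_fun (f_aesm _)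
  have hsub : Set.uIoc (0:ℝ) (π/2) = Set.Ioc (0:ℝ) (π/2) :=
    Set.uIoc_of_le (by linarith [pi_pos])
  rw [hsub]
  filter_upwards [ae_restrict_mem measurableSet_Ioc] with θ hθ
  have h1 : 0 < 2/π*θ := by
    have h' := pi_pos
    have := hθ.1
    positivity
  have h2 : 2/π*θ ≤ |Real.sin θ| := jordan hθ.1 hθ.2
  rw [Real.norm_eq_abs, Real.norm_eq_abs, abs_of_nonneg (f_nonneg θ),
    abs_of_nonneg (rpow_nonneg h1.le _)]
  exact rpow_le_rpow_of_nonpos h1 h2 (by norm_num)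

lemma f_int_base : IntervalIntegrable f volume (-π) π := by
  have h1 := f_int_quarter
  have h2 : IntervalIntegrable f volume (π/2) π := by
    have h := h1.comp_sub_left π
    have e : (fun x => f (π - x)) = f := funext fun x => by simp [f, Real.sin_pi_sub]
    rw [e, sub_zero, show π - π/2 = π/2 by ring] at h
    exact h.symm
  have h3 : IntervalIntegrable f volume 0 π := h1.trans h2
  have h4 : IntervalIntegrable f volume (-π) 0 := by
    have h := h3.comp_sub_left 0
    have e : (fun x => f (0 - x)) = f := funext fun x => by simp [f]
    rw [e, sub_zero, zero_sub] at h
    exact h.symm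
  exact h4.trans h3

lemma per_int {E : Type*} [NormedAddCommGroup E] {F : ℝ → E}
    (hp : Function.Periodic F (2*π)) (h : IntervalIntegrable F volume (-π) π) :
    IntervalIntegrable F volume (-(3*π)) (3*π) := by
  have e1 : (fun x => F (x + 2*π)) = F := funext fun x => hp x
  have h1 := h.comp_add_right (2*π)
  rw [e1] at h1
  have h1' : IntervalIntegrable F volume (-(3*π)) (-π) := by
    have : -π - 2*π = -(3*π) := by ring
    have h2 : π - 2*π = -π := by ring
    rwa [this, h2] at h1
  have e2 : (fun x => F (x - 2*π)) = F := funext fun x => hp.sub_eq x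
  have h2 := h.comp_sub_right (2*π)
  rw [e2] at h2
  have h2' : IntervalIntegrable F volume π (3*π) := by
    have e3 : -π + 2*π = π := by ring
    have e4 : π + 2*π = 3*π := by ring
    rwa [e3, e4] at h2
  exact (h1'.trans h).trans h2'

lemma per_int' {E : Type*} [NormedAddCommGroup E] {F : ℝ → E}
    (hp : Function.Periodic F (2*π)) (h : IntervalIntegrable F volume (-π) π)
    {c d : ℝ} (hc : |c| ≤ 2*π) (hd : |d| ≤ 2*π) :
    IntervalIntegrable F volume c d := by
  have hπ := pi_pos
  have hc' := abs_le.1 hc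
  have hd' := abs_le.1 hd
  apply (per_int hp h).mono_set
  rw [Set.uIcc_of_le (show -(3*π) ≤ 3*π by linarith)]
  exact Set.uIcc_subset_Icc ⟨by linarith, by linarith⟩ ⟨by linarith, by linarith⟩

lemma integral_shift {E : Type*} [NormedAddCommGroup E] [NormedSpace ℝ E]
    {F : ℝ → E} (hp : Function.Periodic F (2*π)) (h : ℝ) :
    (∫ x in (-π)..π, F (x + h)) = ∫ x in (-π)..π, F x := by
  rw [intervalIntegral.integral_comp_add_right]
  have key := hp.intervalIntegral_add_eq (-π + h) (-π)
  have e1 : -π + h + 2*π = π + h := by ring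
  have e2 : -π + 2*π = π := by ring
  rwa [e1, e2] at key


lemma four_fold {G : ℝ → ℝ} (h1 : ∀ x, G (-x) = G x) (h2 : ∀ x, G (π - x) = G x)
    (hi : IntervalIntegrable G volume 0 (π/2)) :
    ∫ θ in (-π)..π, G θ = 4 * ∫ θ in (0:ℝ)..(π/2), G θ := by
  have i2 : IntervalIntegrable G volume (π/2) π := by
    have h := hi.comp_sub_left π
    rw [funext h2, sub_zero, show π - π/2 = π/2 by ring] at h
    exact h.symm
  have i02 : IntervalIntegrable G volume 0 π := hi.trans i2
  have i3 : IntervalIntegrable G volume (-π) 0 := by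
    have h := i02.comp_sub_left 0
    have e : (fun x => G (0 - x)) = G := funext fun x => by rw [zero_sub, h1]
    rw [e, sub_zero, zero_sub] at h
    exact h.symm
  have e2 : ∫ θ in (π/2)..π, G θ = ∫ θ in (0:ℝ)..(π/2), G θ := by
    have h := intervalIntegral.integral_comp_sub_left (a := 0) (b := π/2) G π
    simp_rw [h2] at h
    rw [sub_zero, show π - π/2 = π/2 by ring] at h
    exact h.symm
  have e3 : ∫ θ in (-π)..(0:ℝ), G θ = ∫ θ in (0:ℝ)..π, G θ := by
    have h := intervalIntegral.integral_comp_neg (a := 0) (b := π) G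
    simp_rw [h1] at h
    rw [neg_zero] at h
    exact h.symm
  have s1 := integral_add_adjacent_intervals i3 i02
  have s2 := integral_add_adjacent_intervals hi i2
  linarith

lemma subInt {b c d : ℝ} {G : ℝ → ℝ} (hi : IntervalIntegrable G volume b c)
    (h1 : b ≤ d) (h2 : d ≤ c) :
    IntervalIntegrable G volume b d ∧ IntervalIntegrable G volume d c := by
  constructor <;> apply hi.mono_set <;>
    rw [Set.uIcc_of_le (by linarith : b ≤ c)] <;>
    apply Set.uIcc_subset_Icc <;> constructor <;> linarith

lemma C1 {δ : ℝ} (h0 : 0 < δ) (h1 : δ ≤ 1) :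
    ∫ θ in (-π)..π, (f θ - q δ θ) ≤ 16*π/5 * δ ^ ((5:ℝ)/8) := by
  have hπ := pi_pos
  set G := fun θ => f θ - q δ θ with hG
  have hsym1 : ∀ x, G (-x) = G x := fun x => by simp [hG, f, q]
  have hsym2 : ∀ x, G (π - x) = G x := fun x => by simp [hG, f, q, Real.sin_pi_sub]
  have hqint : IntervalIntegrable (q δ) volume 0 (π/2) :=
    (q_cont h0).intervalIntegrable _ _
  have hiG : IntervalIntegrable G volume 0 (π/2) := f_int_quarter.sub hqint
  rw [four_fold hsym1 hsym2 hiG]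
  set G₂ := fun θ : ℝ => (2/π*θ) ^ (-(3:ℝ)/8) - (max (2/π*θ) δ) ^ (-(3:ℝ)/8) with hG2
  have hG2a : IntervalIntegrable (fun x : ℝ => (2/π*x) ^ (-(3:ℝ)/8)) volume 0 (π/2) := by
    have h := (intervalIntegrable_rpow' (a := 0) (b := 1)
      (show (-1:ℝ) < -(3:ℝ)/8 by norm_num)).comp_mul_left (c := 2/π) enorm_ne_top enorm_ne_top
    have e0 : (0:ℝ) / (2/π) = 0 := by simp
    have e1 : (1:ℝ) / (2/π) = π/2 := by field_simp
    rwa [e0, e1] at h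
  have hG2b : Continuous (fun θ : ℝ => (max (2/π*θ) δ) ^ (-(3:ℝ)/8)) := by
    apply Continuous.rpow_const ((continuous_const.mul continuous_id).max continuous_const)
    intro x; left
    exact ne_of_gt (lt_of_lt_of_le h0 (le_max_right _ _))
  have hG2int : IntervalIntegrable G₂ volume 0 (π/2) :=
    hG2a.sub (hG2b.intervalIntegrable _ _)
  have hmono : ∀ θ ∈ Set.Icc (0:ℝ) (π/2), G θ ≤ G₂ θ := by
    intro θ hθ
    rcases eq_or_lt_of_le hθ.1 with h | h
    · simp only [hG, hG2, ← h, f, q, mul_zero, Real.sin_zero, abs_zero]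
      rw [Real.zero_rpow (by norm_num : -(3:ℝ)/8 ≠ 0)]
    · exact q_mono (by positivity) (jordan h hθ.2)
  have step1 : ∫ θ in (0:ℝ)..(π/2), G θ ≤ ∫ θ in (0:ℝ)..(π/2), G₂ θ :=
    intervalIntegral.integral_mono_on (by linarith) hiG hG2int hmono
  set b := π/2*δ with hb
  have hbpos : 0 ≤ b := by positivity
  have hble : b ≤ π/2 := by nlinarith
  obtain ⟨hsp1, hsp2⟩ := subInt hG2int hbpos hble
  have hsplit : ∫ θ in (0:ℝ)..(π/2), G₂ θ = (∫ θ in (0:ℝ)..b, G₂ θ) + ∫ θ in b..(π/2), G₂ θ :=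
    (integral_add_adjacent_intervals hsp1 hsp2).symm
  have hzero : ∫ θ in b..(π/2), G₂ θ = 0 := by
    rw [intervalIntegral.integral_congr (g := fun _ => (0:ℝ))]
    · simp
    · intro θ hθ
      rw [Set.uIcc_of_le hble] at hθ
      have hδθ : δ ≤ 2/π*θ := by
        have := hθ.1
        rw [hb] at this
        rw [div_mul_eq_mul_div, le_div_iff₀ hπ]
        nlinarith
      simp only [hG2]
      rw [max_eq_left hδθ, sub_self]
  have hfirst : ∫ θ in (0:ℝ)..b, G₂ θ ≤ ∫ θ in (0:ℝ)..b, (2/π*θ) ^ (-(3:ℝ)/8) := by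
    obtain ⟨ha1, _⟩ := subInt hG2a hbpos hble
    apply intervalIntegral.integral_mono_on hbpos hsp1 ha1
    intro θ hθ
    simp only [hG2]
    have : (0:ℝ) ≤ (max (2/π*θ) δ) ^ (-(3:ℝ)/8) :=
      rpow_nonneg (le_trans h0.le (le_max_right _ _)) _
    linarith
  have hcomp : ∫ θ in (0:ℝ)..b, (2/π*θ) ^ (-(3:ℝ)/8)
      = (2/π)⁻¹ • ∫ u in (0:ℝ)..δ, u ^ (-(3:ℝ)/8) := by
    have h := intervalIntegral.integral_comp_mul_left (a := 0) (b := b)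
      (fun u : ℝ => u ^ (-(3:ℝ)/8)) (show 2/π ≠ 0 by positivity)
    rw [mul_zero, show 2/π*b = δ by rw [hb]; field_simp] at h
    exact h
  have hval : ∫ u in (0:ℝ)..δ, u ^ (-(3:ℝ)/8) = δ ^ ((5:ℝ)/8) / (5/8) := by
    rw [integral_rpow (Or.inl (by norm_num))]
    rw [Real.zero_rpow (by norm_num : -(3:ℝ)/8 + 1 ≠ 0)]
    norm_num
  have hfin : ∫ θ in (0:ℝ)..b, (2/π*θ) ^ (-(3:ℝ)/8) = 4*π/5 * δ ^ ((5:ℝ)/8) := by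
    rw [hcomp, hval, smul_eq_mul]
    field_simp
    ring
  have hnn : 0 ≤ δ ^ ((5:ℝ)/8) := rpow_nonneg h0.le _
  nlinarith [step1, hsplit, hzero, hfirst, hfin]


lemma jordan' {θ : ℝ} (hθ : θ ∈ Set.Icc (0:ℝ) (π/2)) : 2/π*θ ≤ |Real.sin θ| := by
  rcases eq_or_lt_of_le hθ.1 with h | h
  · simp [← h]
  · exact jordan h hθ.2

lemma C2 {δ : ℝ} (h0 : 0 < δ) (h1 : δ ≤ 1) :
    ∫ θ in (-π)..π, M δ θ ≤ 22*π/3 * δ ^ (-(3:ℝ)/8) := by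
  have hπ := pi_pos
  have hsym1 : ∀ x, M δ (-x) = M δ x := fun x => by simp [M]
  have hsym2 : ∀ x, M δ (π - x) = M δ x := fun x => by simp [M, Real.sin_pi_sub]
  have hiM : IntervalIntegrable (M δ) volume 0 (π/2) := (M_cont h0).intervalIntegrable _ _
  rw [four_fold hsym1 hsym2 hiM]
  set N := fun θ : ℝ => (max (2/π*θ) δ) ^ (-(11:ℝ)/8) with hN
  have hNc : Continuous N := by
    apply Continuous.rpow_const ((continuous_const.mul continuous_id).max continuous_const)
    intro x; left
    exact ne_of_gt (lt_of_lt_of_le h0 (le_max_right _ _))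
  have hNint : IntervalIntegrable N volume 0 (π/2) := hNc.intervalIntegrable _ _
  have step1 : ∫ θ in (0:ℝ)..(π/2), M δ θ ≤ ∫ θ in (0:ℝ)..(π/2), N θ := by
    apply intervalIntegral.integral_mono_on (by linarith) hiM hNint
    intro θ hθ
    exact M_mono h0 (jordan' hθ)
  set b := π/2*δ with hb
  have hbpos : 0 ≤ b := by positivity
  have hble : b ≤ π/2 := by nlinarith
  obtain ⟨hsp1, hsp2⟩ := subInt hNint hbpos hble
  have hsplit : ∫ θ in (0:ℝ)..(π/2), N θ = (∫ θ in (0:ℝ)..b, N θ) + ∫ θ in b..(π/2), N θ :=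
    (integral_add_adjacent_intervals hsp1 hsp2).symm
  have hfirst : ∫ θ in (0:ℝ)..b, N θ ≤ π/2 * δ ^ (-(3:ℝ)/8) := by
    have hmono : ∀ θ ∈ Set.Icc (0:ℝ) b, N θ ≤ δ ^ (-(11:ℝ)/8) := by
      intro θ hθ
      exact rpow_le_rpow_of_nonpos h0 (le_max_right _ _) (by norm_num)
    have h := intervalIntegral.integral_mono_on hbpos hsp1
      (intervalIntegrable_const) hmono
    rw [intervalIntegral.integral_const, smul_eq_mul, sub_zero] at h
    have e : b * δ ^ (-(11:ℝ)/8) = π/2 * δ ^ (-(3:ℝ)/8) := by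
      have e2 : δ * δ ^ (-(11:ℝ)/8) = δ ^ (-(3:ℝ)/8) := by
        have e3 := (Real.rpow_add h0 1 (-(11:ℝ)/8)).symm
        rw [Real.rpow_one] at e3
        rw [e3]; norm_num
      rw [hb, mul_assoc, e2]
    rw [e] at h
    exact h
  have hsecond : ∫ θ in b..(π/2), N θ ≤ 4*π/3 * δ ^ (-(3:ℝ)/8) := by
    have hcongr : ∫ θ in b..(π/2), N θ = ∫ θ in b..(π/2), (2/π*θ) ^ (-(11:ℝ)/8) := by
      apply intervalIntegral.integral_congr
      intro θ hθ
      rw [Set.uIcc_of_le hble] at hθ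
      have hδθ : δ ≤ 2/π*θ := by
        have := hθ.1
        rw [hb] at this
        rw [div_mul_eq_mul_div, le_div_iff₀ hπ]
        nlinarith
      simp only [hN]
      rw [max_eq_left hδθ]
    have hcomp : ∫ θ in b..(π/2), (2/π*θ) ^ (-(11:ℝ)/8)
        = (2/π)⁻¹ • ∫ u in δ..(1:ℝ), u ^ (-(11:ℝ)/8) := by
      have h := intervalIntegral.integral_comp_mul_left (a := b) (b := π/2)
        (fun u : ℝ => u ^ (-(11:ℝ)/8)) (show 2/π ≠ 0 by positivity)
      rw [show 2/π*b = δ by rw [hb]; field_simp,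
        show 2/π*(π/2) = 1 by field_simp] at h
      exact h
    have hval : ∫ u in δ..(1:ℝ), u ^ (-(11:ℝ)/8) = ((1:ℝ) - δ ^ (-(3:ℝ)/8)) / (-(3/8)) := by
      rw [integral_rpow (Or.inr ⟨by norm_num, by
        rw [Set.uIcc_of_le h1]
        intro hmem
        exact absurd hmem.1 (by linarith)⟩)]
      norm_num [Real.one_rpow]
    rw [hcongr, hcomp, hval, smul_eq_mul]
    have hd : (0:ℝ) < δ ^ (-(3:ℝ)/8) := rpow_pos_of_pos h0 _
    have e : (2/π)⁻¹ * (((1:ℝ) - δ ^ (-(3:ℝ)/8)) / (-(3/8))) 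
        = 4*π/3 * (δ ^ (-(3:ℝ)/8) - 1) := by
      field_simp
      ring
    rw [e]
    nlinarith
  have hd : (0:ℝ) < δ ^ (-(3:ℝ)/8) := rpow_pos_of_pos h0 _
  nlinarith [step1, hsplit, hfirst, hsecond]

lemma ae_sin_ne : ∀ᵐ θ : ℝ ∂volume, Real.sin θ ≠ 0 := by
  rw [MeasureTheory.ae_iff]; simpa using sin_zero_null

lemma ae_sin_shift_ne (h : ℝ) : ∀ᵐ θ : ℝ ∂volume, Real.sin (θ + h) ≠ 0 := by
  rw [MeasureTheory.ae_iff]; simpa using sin_shift_null h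

lemma abs_sin_le_abs' {t : ℝ} (ht : 0 ≤ t) : |Real.sin t| ≤ |t| := by
  rcases le_total t 1 with h1 | h1
  · rw [abs_of_nonneg ht,
      abs_of_nonneg (Real.sin_nonneg_of_nonneg_of_le_pi ht (by linarith [pi_gt_three]))]
    rcases eq_or_lt_of_le ht with h | h
    · simp [← h]
    · exact (Real.sin_lt h).le
  · calc |Real.sin t| ≤ 1 := Real.abs_sin_le_one t
      _ ≤ |t| := by rw [abs_of_nonneg ht]; linarith

lemma abs_sin_le_abs (t : ℝ) : |Real.sin t| ≤ |t| := by
  rcases le_total 0 t with h | h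
  · exact abs_sin_le_abs' h
  · have := abs_sin_le_abs' (t := -t) (by linarith)
    rwa [Real.sin_neg, abs_neg, abs_neg] at this

lemma sin_lip (A B : ℝ) : |Real.sin A - Real.sin B| ≤ |A - B| := by
  rw [Real.sin_sub_sin, abs_mul, abs_mul]
  have h1 : |Real.sin ((A - B)/2)| ≤ |A - B|/2 := by
    have := abs_sin_le_abs ((A - B)/2)
    rwa [abs_div, abs_of_nonneg (by norm_num : (0:ℝ) ≤ 2)] at this
  have h2 : |Real.cos ((A + B)/2)| ≤ 1 := Real.abs_cos_le_one _
  have h3 : (0:ℝ) ≤ |Real.sin ((A-B)/2)| := abs_nonneg _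
  calc |(2:ℝ)| * |Real.sin ((A-B)/2)| * |Real.cos ((A+B)/2)|
      ≤ |(2:ℝ)| * |Real.sin ((A-B)/2)| * 1 := by
        apply mul_le_mul_of_nonneg_left h2; positivity
    _ = 2 * |Real.sin ((A-B)/2)| := by rw [abs_of_nonneg (by norm_num : (0:ℝ) ≤ 2)]; ring
    _ ≤ 2 * (|A - B|/2) := by linarith
    _ = |A - B| := by ring

section Core

variable {m : ℤ}

def E (m : ℤ) (θ : ℝ) : ℂ := Complex.exp (Complex.I * m * θ)

lemma E_norm (m : ℤ) (θ : ℝ) : ‖E m θ‖ = 1 := by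
  rw [E, Complex.norm_exp]
  have : (Complex.I * (m:ℂ) * (θ:ℂ)).re = 0 := by simp
  rw [this, Real.exp_zero]

lemma E_cont (m : ℤ) : Continuous (E m) :=
  Complex.continuous_exp.comp (continuous_const.mul Complex.continuous_ofReal)

lemma E_periodic (m : ℤ) : Function.Periodic (E m) (2*π) := by
  intro x
  rw [E, E, show Complex.I * (m:ℂ) * ((x + 2*π : ℝ) : ℂ)
      = Complex.I * (m:ℂ) * (x:ℂ) + (m:ℂ) * (2*π*Complex.I) by push_cast; ring,
    Complex.exp_add, Complex.exp_int_mul_two_pi_mul_I, mul_one]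

lemma F_periodic (m : ℤ) : Function.Periodic (fun θ => f θ • E m θ) (2*π) := fun x => by
  simp only [f_periodic x, E_periodic m x]

lemma F_norm (m : ℤ) (θ : ℝ) : ‖f θ • E m θ‖ = f θ := by
  rw [norm_smul, E_norm, mul_one, Real.norm_eq_abs, abs_of_nonneg (f_nonneg θ)]

lemma F_int (m : ℤ) : IntervalIntegrable (fun θ => f θ • E m θ) volume (-π) π := by
  apply f_int_base.mono_fun ((f_aesm _).smul (E_cont m).aestronglyMeasurable)
  apply Filter.Eventually.of_forall
  intro θ
  show ‖f θ • E m θ‖ ≤ ‖f θ‖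
  rw [F_norm, Real.norm_eq_abs, abs_of_nonneg (f_nonneg θ)]

end Core

lemma abs_sub' (a b : ℝ) : |a - b| ≤ |a| + |b| := by
  rw [sub_eq_add_neg]
  exact (abs_add_le _ _).trans (by rw [abs_neg])

lemma core {m : ℤ} (hm : 4 ≤ |m|) :
    ‖∫ θ in (-π)..π, f θ • E m θ‖ ≤ 6*π*(π/|(m:ℝ)|) ^ ((5:ℝ)/8) := by
  have hπ := pi_pos
  have hmR : (4:ℝ) ≤ |(m:ℝ)| := by
    rw [← Int.cast_abs]; exact_mod_cast hm
  have hmpos : (0:ℝ) < |(m:ℝ)| := by linarith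
  have hm0 : (m:ℝ) ≠ 0 := by
    intro h0; rw [h0] at hmpos; simp at hmpos
  have hmC : (m:ℂ) ≠ 0 := by exact_mod_cast (Int.cast_ne_zero (α := ℝ)).1 hm0
  set h : ℝ := π / m with hh
  set δ : ℝ := π / |(m:ℝ)| with hδdef
  have hδpos : 0 < δ := by positivity
  have hδ1 : δ ≤ 1 := by
    rw [hδdef, div_le_one hmpos]; linarith [pi_le_four]
  have habs : |h| = δ := by rw [hh, hδdef, abs_div, abs_of_pos hπ]
  have hδπ : δ ≤ π := by
    rw [hδdef]
    exact div_le_self hπ.le (by linarith)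
  have hhπ : |h| ≤ π := by rw [habs]; exact hδπ
  have hh1 := abs_le.1 hhπ
  -- integrability of shifted f
  have hfh : IntervalIntegrable (fun θ => f (θ + h)) volume (-π) π := by
    have h' := (per_int' f_periodic f_int_base
      (c := -π + h) (d := π + h)
      (abs_le.2 ⟨by linarith, by linarith⟩)
      (abs_le.2 ⟨by linarith, by linarith⟩)).comp_add_right h
    rwa [show -π + h - h = -π by ring, show π + h - h = π by ring] at h'
  have hFh : IntervalIntegrable (fun θ => f (θ+h) • E m θ) volume (-π) π := by
    apply hfh.mono_fun ((f_shift_aesm h _).smul (E_cont m).aestronglyMeasurable)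
    apply Filter.Eventually.of_forall
    intro θ
    show ‖f (θ+h) • E m θ‖ ≤ ‖f (θ+h)‖
    rw [norm_smul, E_norm, mul_one]
  -- translation identity
  have s1 : (∫ θ in (-π)..π, f (θ+h) • E m (θ+h)) = ∫ θ in (-π)..π, f θ • E m θ :=
    integral_shift (F_periodic m) h
  have Eshift : ∀ θ:ℝ, E m (θ + h) = - E m θ := by
    intro θ
    rw [E, E, show Complex.I * (m:ℂ) * ((θ + h : ℝ) : ℂ)
        = Complex.I * (m:ℂ) * (θ:ℂ) + π * Complex.I by
      rw [hh]; push_cast; field_simp,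
      Complex.exp_add, Complex.exp_pi_mul_I, mul_neg_one]
  have s2 : (∫ θ in (-π)..π, f (θ+h) • E m θ) = - ∫ θ in (-π)..π, f θ • E m θ := by
    have c1 : (∫ θ in (-π)..π, f (θ+h) • E m θ)
        = ∫ θ in (-π)..π, -(f (θ+h) • E m (θ+h)) := by
      apply intervalIntegral.integral_congr
      intro θ _
      show f (θ+h) • E m θ = -(f (θ+h) • E m (θ+h))
      rw [Eshift θ, smul_neg, neg_neg]
    rw [c1, intervalIntegral.integral_neg, s1]
  have key2 : (2:ℝ) • ∫ θ in (-π)..π, f θ • E m θ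
      = ∫ θ in (-π)..π, (f θ - f (θ+h)) • E m θ := by
    have c2 : (∫ θ in (-π)..π, (f θ - f (θ+h)) • E m θ)
        = ∫ θ in (-π)..π, (f θ • E m θ - f (θ+h) • E m θ) := by
      apply intervalIntegral.integral_congr
      intro θ _
      show (f θ - f (θ+h)) • E m θ = f θ • E m θ - f (θ+h) • E m θ
      exact sub_smul _ _ _
    rw [c2, intervalIntegral.integral_sub (F_int m) hFh, s2, sub_neg_eq_add, two_smul]
  have hnorm1 : 2 * ‖∫ θ in (-π)..π, f θ • E m θ‖
      ≤ ∫ θ in (-π)..π, |f θ - f (θ+h)| := by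
    have e1 : ‖(2:ℝ) • ∫ θ in (-π)..π, f θ • E m θ‖
        = 2 * ‖∫ θ in (-π)..π, f θ • E m θ‖ := by
      rw [norm_smul]; norm_num
    rw [← e1, key2]
    refine (intervalIntegral.norm_integral_le_integral_norm (by linarith)).trans_eq ?_
    apply intervalIntegral.integral_congr
    intro θ _
    show ‖(f θ - f (θ+h)) • E m θ‖ = |f θ - f (θ+h)|
    rw [norm_smul, E_norm, mul_one, Real.norm_eq_abs]
  -- pointwise bound
  set D : ℝ → ℝ := fun θ => (f θ - q δ θ) + (f (θ+h) - q δ (θ+h))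
    + 3/8*δ*(M δ θ + M δ (θ+h)) with hDdef
  have hae : (fun θ => |f θ - f (θ+h)|) ≤ᵐ[volume] D := by
    filter_upwards [ae_sin_ne, ae_sin_shift_ne h] with θ h1 h2
    have hx : 0 < |Real.sin θ| := abs_pos.2 h1
    have hy : 0 < |Real.sin (θ+h)| := abs_pos.2 h2
    have hA : 0 ≤ f θ - q δ θ := by
      have := rpow_le_rpow_of_nonpos hx (le_max_left |Real.sin θ| δ)
        (show -(3:ℝ)/8 ≤ 0 by norm_num)
      rw [f, q]; linarith
    have hB : 0 ≤ f (θ+h) - q δ (θ+h) := by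
      have := rpow_le_rpow_of_nonpos hy (le_max_left |Real.sin (θ+h)| δ)
        (show -(3:ℝ)/8 ≤ 0 by norm_num)
      rw [f, q]; linarith
    have hq : |q δ θ - q δ (θ+h)| ≤ 3/8*δ*(M δ θ + M δ (θ+h)) := by
      have hl := lip (x := |Real.sin θ|) (y := |Real.sin (θ+h)|) (δ := δ) hδpos
      have hxy : |(|Real.sin θ| - |Real.sin (θ+h)|)| ≤ δ := by
        calc |(|Real.sin θ| - |Real.sin (θ+h)|)|
            ≤ |Real.sin θ - Real.sin (θ+h)| := abs_abs_sub_abs_le_abs_sub _ _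
          _ ≤ |θ - (θ+h)| := sin_lip _ _
          _ = δ := by rw [show θ - (θ+h) = -h by ring, abs_neg, habs]
      have hM1 : 0 ≤ M δ θ := rpow_nonneg (le_trans hδpos.le (le_max_right _ _)) _
      have hM2 : 0 ≤ M δ (θ+h) := rpow_nonneg (le_trans hδpos.le (le_max_right _ _)) _
      have habs2 : 0 ≤ |(|Real.sin θ| - |Real.sin (θ+h)|)| := abs_nonneg _
      calc |q δ θ - q δ (θ+h)|
          ≤ 3/8 * |(|Real.sin θ| - |Real.sin (θ+h)|)| * (M δ θ + M δ (θ+h)) := hl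
        _ ≤ 3/8*δ*(M δ θ + M δ (θ+h)) := by nlinarith
    have e : f θ - f (θ+h) = ((f θ - q δ θ) - (f (θ+h) - q δ (θ+h)))
        + (q δ θ - q δ (θ+h)) := by ring
    calc |f θ - f (θ+h)|
        = |((f θ - q δ θ) - (f (θ+h) - q δ (θ+h))) + (q δ θ - q δ (θ+h))| := by rw [e]
      _ ≤ |(f θ - q δ θ) - (f (θ+h) - q δ (θ+h))| + |q δ θ - q δ (θ+h)| := abs_add_le _ _
      _ ≤ (|f θ - q δ θ| + |f (θ+h) - q δ (θ+h)|) + |q δ θ - q δ (θ+h)| := by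
          linarith [abs_sub' (f θ - q δ θ) (f (θ+h) - q δ (θ+h))]
      _ ≤ D θ := by
          rw [abs_of_nonneg hA, abs_of_nonneg hB]
          simp only [hDdef]
          linarith
  -- integrability of all pieces
  have hqint : IntervalIntegrable (q δ) volume (-π) π :=
    (q_cont hδpos).intervalIntegrable _ _
  have hqhint : IntervalIntegrable (fun θ => q δ (θ+h)) volume (-π) π :=
    ((q_cont hδpos).comp (continuous_id.add continuous_const)).intervalIntegrable _ _
  have hMint : IntervalIntegrable (M δ) volume (-π) π :=
    (M_cont hδpos).intervalIntegrable _ _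
  have hMhint : IntervalIntegrable (fun θ => M δ (θ+h)) volume (-π) π :=
    ((M_cont hδpos).comp (continuous_id.add continuous_const)).intervalIntegrable _ _
  have hLHSint : IntervalIntegrable (fun θ => |f θ - f (θ+h)|) volume (-π) π := by
    have hmeas : AEStronglyMeasurable (fun θ => |f θ - f (θ+h)|)
        (volume.restrict (Set.uIoc (-π) π)) := by
      have hn := ((f_aesm (Set.uIoc (-π) π)).sub (f_shift_aesm h (Set.uIoc (-π) π))).norm
      simpa [Real.norm_eq_abs] using hn
    apply (f_int_base.add hfh).mono_fun hmeas
    apply Filter.Eventually.of_forall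
    intro θ
    show ‖|f θ - f (θ+h)|‖ ≤ ‖f θ + f (θ+h)‖
    rw [Real.norm_eq_abs, Real.norm_eq_abs, abs_abs,
      abs_of_nonneg (add_nonneg (f_nonneg θ) (f_nonneg (θ+h)))]
    exact (abs_sub' _ _).trans
      (by rw [abs_of_nonneg (f_nonneg θ), abs_of_nonneg (f_nonneg (θ+h))])
  have hDint1 : IntervalIntegrable (fun θ => (f θ - q δ θ) + (f (θ+h) - q δ (θ+h)))
      volume (-π) π := (f_int_base.sub hqint).add (hfh.sub hqhint)
  have hDint2 : IntervalIntegrable (fun θ => 3/8*δ*(M δ θ + M δ (θ+h))) volume (-π) π :=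
    (hMint.add hMhint).const_mul _
  have hDint : IntervalIntegrable D volume (-π) π := hDint1.add hDint2
  have hmono_int : (∫ θ in (-π)..π, |f θ - f (θ+h)|) ≤ ∫ θ in (-π)..π, D θ :=
    intervalIntegral.integral_mono_ae (by linarith) hLHSint hDint hae
  have hD : ∫ θ in (-π)..π, D θ
      = ((∫ θ in (-π)..π, (f θ - q δ θ)) + (∫ θ in (-π)..π, (f (θ+h) - q δ (θ+h))))
        + 3/8*δ*((∫ θ in (-π)..π, M δ θ) + ∫ θ in (-π)..π, M δ (θ+h)) := by
    rw [intervalIntegral.integral_add hDint1 hDint2,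
      intervalIntegral.integral_add (f_int_base.sub hqint) (hfh.sub hqhint),
      intervalIntegral.integral_const_mul,
      intervalIntegral.integral_add hMint hMhint]
  have sh1 : (∫ θ in (-π)..π, (f (θ+h) - q δ (θ+h))) = ∫ θ in (-π)..π, (f θ - q δ θ) :=
    integral_shift (f_periodic.sub (q_periodic δ)) h
  have sh2 : (∫ θ in (-π)..π, M δ (θ+h)) = ∫ θ in (-π)..π, M δ θ :=
    integral_shift (M_periodic δ) h
  have hC1 := C1 hδpos hδ1
  have hC2 := C2 hδpos hδ1
  have hδδ : δ * δ ^ (-(3:ℝ)/8) = δ ^ ((5:ℝ)/8) := by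
    have e3 := (Real.rpow_add hδpos 1 (-(3:ℝ)/8)).symm
    rw [Real.rpow_one] at e3
    rw [e3]; norm_num
  have hpow : (0:ℝ) ≤ δ ^ ((5:ℝ)/8) := (rpow_pos_of_pos hδpos _).le
  have total : (∫ θ in (-π)..π, |f θ - f (θ+h)|) ≤ 12*π*δ^((5:ℝ)/8) := by
    rw [hD, sh1, sh2] at hmono_int
    have hMbd : 3/8*δ*((∫ θ in (-π)..π, M δ θ) + ∫ θ in (-π)..π, M δ θ)
        ≤ 3/8*δ*(2*(22*π/3 * δ ^ (-(3:ℝ)/8))) := by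
      apply mul_le_mul_of_nonneg_left _ (by positivity)
      linarith
    have e4 : 3/8*δ*(2*(22*π/3 * δ ^ (-(3:ℝ)/8))) = 11/2*π*(δ * δ ^ (-(3:ℝ)/8)) := by ring
    rw [e4, hδδ] at hMbd
    nlinarith [hmono_int, hC1, hMbd]
  linarith [hnorm1, total]

lemma q_one (θ : ℝ) : q 1 θ = 1 := by
  rw [q, max_eq_right (Real.abs_sin_le_one θ), Real.one_rpow]

lemma B_bound : ∫ θ in (-π)..π, f θ ≤ 6*π := by
  have hπ := pi_pos
  have hq1int : IntervalIntegrable (q 1) volume (-π) π :=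
    (q_cont one_pos).intervalIntegrable _ _
  have e : ∫ θ in (-π)..π, f θ
      = (∫ θ in (-π)..π, (f θ - q 1 θ)) + ∫ θ in (-π)..π, q 1 θ := by
    rw [← intervalIntegral.integral_add (f_int_base.sub hq1int) hq1int]
    apply intervalIntegral.integral_congr
    intro θ _
    show f θ = (f θ - q 1 θ) + q 1 θ
    ring
  have h1 := C1 one_pos le_rfl
  rw [Real.one_rpow] at h1
  have h2 : ∫ θ in (-π)..π, q 1 θ = 2*π := by
    rw [intervalIntegral.integral_congr (g := fun _ => (1:ℝ)) (fun θ _ => q_one θ),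
      intervalIntegral.integral_const, smul_eq_mul, mul_one]
    ring
  rw [e, h2]
  linarith

lemma trivial_bound (m : ℤ) : ‖∫ θ in (-π)..π, f θ • E m θ‖ ≤ 6*π := by
  refine (intervalIntegral.norm_integral_le_integral_norm (by linarith [pi_pos])).trans ?_
  calc ∫ θ in (-π)..π, ‖f θ • E m θ‖ = ∫ θ in (-π)..π, f θ := by
        apply intervalIntegral.integral_congr
        intro θ _
        exact F_norm m θ
    _ ≤ 6*π := B_bound

lemma final (m : ℤ) :
    ‖(2 * π)⁻¹ • ∫ θ in (-π)..π, f θ • E m θ‖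
      ≤ 24 * (1 + (m : ℝ) ^ 2) ^ (-(5 : ℝ) / 16) := by
  have hπ := pi_pos
  have hbase : (0:ℝ) < 1 + (m:ℝ)^2 := by positivity
  set X : ℝ := (1 + (m:ℝ)^2) ^ ((5:ℝ)/16) with hX
  have hXpos : 0 < X := rpow_pos_of_pos hbase _
  have hRHS : (1 + (m:ℝ)^2) ^ (-(5:ℝ)/16) = X⁻¹ := by
    rw [show (-(5:ℝ)/16) = -((5:ℝ)/16) by norm_num, Real.rpow_neg hbase.le]
  have hnorm : ‖(2 * π)⁻¹ • ∫ θ in (-π)..π, f θ • E m θ‖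
      = (2*π)⁻¹ * ‖∫ θ in (-π)..π, f θ • E m θ‖ := by
    rw [norm_smul, Real.norm_eq_abs, abs_of_pos (by positivity)]
  rw [hnorm, hRHS]
  rcases le_or_gt 4 |m| with hm | hm
  · -- large m
    have hmR : (4:ℝ) ≤ |(m:ℝ)| := by
      rw [← Int.cast_abs]; exact_mod_cast hm
    have hmpos : (0:ℝ) < |(m:ℝ)| := by linarith
    set Y : ℝ := |(m:ℝ)| ^ ((5:ℝ)/8) with hYdef
    have hYpos : 0 < Y := rpow_pos_of_pos hmpos _
    have hcore := core hm
    have hXle : X ≤ 2*Y := by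
      have hsq : (1:ℝ) ≤ (m:ℝ)^2 := by nlinarith [sq_abs (m:ℝ)]
      have h2m : 1 + (m:ℝ)^2 ≤ 2*(m:ℝ)^2 := by nlinarith
      have l1 : X ≤ (2*(m:ℝ)^2) ^ ((5:ℝ)/16) :=
        Real.rpow_le_rpow hbase.le h2m (by norm_num)
      have l2 : (2*(m:ℝ)^2) ^ ((5:ℝ)/16)
          = (2:ℝ) ^ ((5:ℝ)/16) * ((m:ℝ)^2) ^ ((5:ℝ)/16) :=
        Real.mul_rpow (by norm_num) (sq_nonneg _)
      have l3 : ((m:ℝ)^2) ^ ((5:ℝ)/16) = Y := by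
        rw [← sq_abs (m:ℝ), ← Real.rpow_natCast |(m:ℝ)| 2,
          ← Real.rpow_mul (abs_nonneg _)]
        norm_num [hYdef]
      have l4 : (2:ℝ) ^ ((5:ℝ)/16) ≤ 2 := by
        have := Real.rpow_le_rpow_of_exponent_le (x := 2) one_le_two
          (show (5:ℝ)/16 ≤ 1 by norm_num)
        rwa [Real.rpow_one] at this
      calc X ≤ (2*(m:ℝ)^2) ^ ((5:ℝ)/16) := l1
        _ = (2:ℝ) ^ ((5:ℝ)/16) * Y := by rw [l2, l3]
        _ ≤ 2*Y := mul_le_mul_of_nonneg_right l4 hYpos.le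
    have hπpow : π ^ ((5:ℝ)/8) ≤ 4 := by
      have l1 : π ^ ((5:ℝ)/8) ≤ (4:ℝ) ^ ((5:ℝ)/8) :=
        Real.rpow_le_rpow hπ.le pi_le_four (by norm_num)
      have l2 : (4:ℝ) ^ ((5:ℝ)/8) ≤ 4 := by
        have := Real.rpow_le_rpow_of_exponent_le (x := 4) (by norm_num)
          (show (5:ℝ)/8 ≤ 1 by norm_num)
        rwa [Real.rpow_one] at this
      linarith
    calc (2*π)⁻¹ * ‖∫ θ in (-π)..π, f θ • E m θ‖
        ≤ (2*π)⁻¹ * (6*π*(π/|(m:ℝ)|) ^ ((5:ℝ)/8)) := by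
          apply mul_le_mul_of_nonneg_left hcore (by positivity)
      _ = 3 * (π ^ ((5:ℝ)/8) / Y) := by
          rw [Real.div_rpow hπ.le (abs_nonneg _)]
          field_simp
          ring
      _ ≤ 3 * ((4:ℝ) / Y) := by
          apply mul_le_mul_of_nonneg_left _ (by norm_num)
          gcongr
      _ = 12 / Y := by ring
      _ ≤ 24 / X := by
          rw [div_le_div_iff₀ hYpos hXpos]
          nlinarith [hXle]
      _ = 24 * X⁻¹ := by rw [div_eq_mul_inv]
  · -- small m
    have hmR : |(m:ℝ)| ≤ 3 := by
      rw [← Int.cast_abs]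
      have h3 : |m| ≤ 3 := Int.lt_add_one_iff.1 hm
      exact_mod_cast h3
    have hXle : X ≤ 4 := by
      have h10 : 1 + (m:ℝ)^2 ≤ 10 := by
        nlinarith [sq_abs (m:ℝ), abs_nonneg (m:ℝ),
          mul_self_le_mul_self (abs_nonneg (m:ℝ)) hmR]
      have l1 : X ≤ (10:ℝ) ^ ((5:ℝ)/16) := Real.rpow_le_rpow hbase.le h10 (by norm_num)
      have l2 : (10:ℝ) ^ ((5:ℝ)/16) ≤ (10:ℝ) ^ ((1:ℝ)/2) :=
        Real.rpow_le_rpow_of_exponent_le (by norm_num) (by norm_num)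
      have l3 : (10:ℝ) ^ ((1:ℝ)/2) ≤ 4 := by
        rw [← Real.sqrt_eq_rpow]
        calc Real.sqrt 10 ≤ Real.sqrt 16 := Real.sqrt_le_sqrt (by norm_num)
          _ = 4 := by
            rw [show (16:ℝ) = 4^2 by norm_num, Real.sqrt_sq (by norm_num : (0:ℝ) ≤ 4)]
      linarith
    have l1 : (2*π)⁻¹ * ‖∫ θ in (-π)..π, f θ • E m θ‖ ≤ 3 := by
      calc (2*π)⁻¹ * ‖∫ θ in (-π)..π, f θ • E m θ‖
          ≤ (2*π)⁻¹ * (6*π) := mul_le_mul_of_nonneg_left (trivial_bound m) (by positivity)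
        _ = 3 := by field_simp; ring
    have l2 : (3:ℝ) ≤ 24 * X⁻¹ := by
      rw [← div_eq_mul_inv, le_div_iff₀ hXpos]
      nlinarith [hXle]
    linarith

end Stmt8aux

/-- Fourier coefficient bound for the singular weight `|sin θ|^{-3/8}`:
`|∫_{-π}^{π} |sin θ|^{-3/8} e^{imθ} dθ/(2π)| ≲ ⟨m⟩^{-5/8}` uniformly in `m ∈ ℤ`. -/
theorem stmt8 : ∃ C > 0, ∀ m : ℤ,
    ‖(2 * π)⁻¹ • ∫ θ in (-π)..π,
        (|Real.sin θ| ^ (-(3 : ℝ) / 8) : ℝ) • Complex.exp (Complex.I * m * θ)‖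
      ≤ C * (1 + (m : ℝ) ^ 2) ^ (-(5 : ℝ) / 16) := by
  exact ⟨24, by norm_num, fun m => Stmt8aux.final m⟩
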